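/- Let G = A *_C B be an amalgamated free product and let g = a₁b₁a₂b₂⋯ be a reduced form of g (an alternating product of elements of A and B in which no interior term lies in C). If the reduced form has at least one non-trivial term, then g ≠ e in G. -/
import Mathlib

open Monoid

/-- Normal form theorem for amalgamated products (Serre): in an amalgamated product
(a pushout of a family of groups `G i` along injections `φ i : C →* G i`; for the
binary amalgam `A *_C B` take the index type to be `Bool`), if `g` is represented by a
reduced word (an alternating product of elements of the factors with no letter lying in
the amalgamated subgroup `C`) with at least one non-trivial term, then `g ≠ e`. -/
theorem stmt_6 {ι : Type*} {C : Type*} [Group C] {G : ι → Type*} [∀ i, Group (G i)]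
    (φ : ∀ i, C →* G i) (hφ : ∀ i, Function.Injective (φ i))
    (w : Monoid.CoprodI.Word G) (hred : Monoid.PushoutI.Reduced φ w)
    (hne : w.toList ≠ []) :
    Monoid.PushoutI.ofCoprodI w.prod ≠ (1 : Monoid.PushoutI φ) := by
  intro h
  apply hne
  have := hred.eq_empty_of_mem_range hφ (by rw [h]; exact ⟨1, by simp⟩)
  rw [this]
  rfl
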